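/- For every integer n ≥ 1 and every r > 0, the modified Bessel functions of the first kind satisfy I_{n-1}(r) · I_{n+1}(r) > I_n(r)² − (2/r) · I_n(r) · I_{n+1}(r). -/

import Mathlib

open Real Filter Set

/-- Modified Bessel function of the first kind of (integer) order `n`. -/
noncomputable def besselI (n : ℕ) (r : ℝ) : ℝ :=
  ∑' k : ℕ, (1 / (k.factorial * Real.Gamma (n + k + 1))) * (r / 2) ^ (n + 2 * k)

/-- `P n r = I_{n+1}(r) / (r * I_n(r))`. -/
noncomputable def P (n : ℕ) (r : ℝ) : ℝ := besselI (n + 1) r / (r * besselI n r)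

namespace TuranAux

/-- The coefficient `1/(k! (N+k)!)` of the Bessel series. -/
noncomputable def c (N k : ℕ) : ℝ := 1 / (k.factorial * (N + k).factorial)

lemma c_pos (N k : ℕ) : 0 < c N k := by
  unfold c
  positivity

lemma c_succ (N k : ℕ) : c (N + 1) k = c N k / ((N : ℝ) + k + 1) := by
  unfold c
  rw [show N + 1 + k = (N + k) + 1 by omega, Nat.factorial_succ]
  have h1 : ((k.factorial : ℝ)) ≠ 0 := by positivity
  have h2 : (((N + k).factorial : ℝ)) ≠ 0 := by positivity
  have h3 : ((N : ℝ) + k + 1) ≠ 0 := by positivity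
  push_cast
  field_simp

lemma c_add (N j : ℕ) : c N j + c (N + 1) j = ((N : ℝ) + j + 2) * c (N + 1) j := by
  rw [c_succ]
  have h3 : ((N : ℝ) + j + 1) ≠ 0 := by positivity
  field_simp
  ring

/-- The `k`-th term of the Bessel series, as a function of `t = r/2`. -/
noncomputable def term (N : ℕ) (t : ℝ) (k : ℕ) : ℝ := c N k * t ^ (N + 2 * k)

lemma term_nonneg (N : ℕ) {t : ℝ} (ht : 0 ≤ t) (k : ℕ) : 0 ≤ term N t k := by
  unfold term
  exact mul_nonneg (c_pos N k).le (pow_nonneg ht _)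

lemma summable_term (N : ℕ) {t : ℝ} (ht : 0 ≤ t) : Summable (term N t) := by
  refine Summable.of_nonneg_of_le (term_nonneg N ht) (fun k => ?_)
    (((Real.summable_pow_div_factorial (t ^ 2)).mul_left (t ^ N)))
  have h1 : c N k ≤ 1 / k.factorial := by
    unfold c
    apply one_div_le_one_div_of_le
    · positivity
    · exact le_mul_of_one_le_right (by positivity) (by exact_mod_cast (N + k).factorial_pos)
  calc term N t k = c N k * t ^ (N + 2 * k) := rfl
    _ ≤ (1 / k.factorial) * t ^ (N + 2 * k) :=
        mul_le_mul_of_nonneg_right h1 (pow_nonneg ht _)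
    _ = t ^ N * ((t ^ 2) ^ k / k.factorial) := by
        rw [pow_add, pow_mul]; ring

lemma summable_norm_term (N : ℕ) {t : ℝ} (ht : 0 ≤ t) :
    Summable fun k => ‖term N t k‖ := by
  simpa [Real.norm_eq_abs, abs_of_nonneg (term_nonneg N ht _)] using
    (summable_term N ht)

lemma besselI_eq (N : ℕ) (r : ℝ) : besselI N r = ∑' k, term N (r / 2) k := by
  unfold besselI term c
  refine tsum_congr fun k => ?_
  rw [show ((N : ℝ) + k + 1) = ((N + k : ℕ) : ℝ) + 1 by push_cast; ring,
    Real.Gamma_nat_eq_factorial]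

lemma swap_trick {u w : ℕ → ℝ} (hu : ∀ j, 0 ≤ u j) (hw : ∀ j, 0 < w j) (M : ℕ) :
    ∑ p ∈ Finset.HasAntidiagonal.antidiagonal M, u p.1 * u p.2 ≤
      ∑ p ∈ Finset.HasAntidiagonal.antidiagonal M, (w p.1 / w p.2) * (u p.1 * u p.2) := by
  have hswap : ∑ p ∈ Finset.HasAntidiagonal.antidiagonal M, (w p.2 / w p.1) * (u p.2 * u p.1)
      = ∑ p ∈ Finset.HasAntidiagonal.antidiagonal M, (w p.1 / w p.2) * (u p.1 * u p.2) :=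
    Finset.Nat.sum_antidiagonal_swap (f := fun p => (w p.1 / w p.2) * (u p.1 * u p.2))
  have key : ∀ p : ℕ × ℕ, 2 * (u p.1 * u p.2) ≤
      (w p.1 / w p.2) * (u p.1 * u p.2) + (w p.2 / w p.1) * (u p.2 * u p.1) := by
    intro p
    have h1 := hw p.1
    have h2 := hw p.2
    have hs : 0 ≤ u p.1 * u p.2 := mul_nonneg (hu _) (hu _)
    have hamgm : 2 ≤ w p.1 / w p.2 + w p.2 / w p.1 := by
      rw [div_add_div _ _ (ne_of_gt h2) (ne_of_gt h1), le_div_iff₀ (by positivity)]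
      nlinarith [sq_nonneg (w p.1 - w p.2)]
    nlinarith [mul_le_mul_of_nonneg_right hamgm hs]
  have h2 : 2 * ∑ p ∈ Finset.HasAntidiagonal.antidiagonal M, u p.1 * u p.2 ≤
      ∑ p ∈ Finset.HasAntidiagonal.antidiagonal M, (w p.1 / w p.2) * (u p.1 * u p.2) +
        ∑ p ∈ Finset.HasAntidiagonal.antidiagonal M, (w p.2 / w p.1) * (u p.2 * u p.1) := by
    rw [Finset.mul_sum, ← Finset.sum_add_distrib]
    exact Finset.sum_le_sum fun p _ => key p
  linarith [hswap ▸ h2]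

lemma swap_trick_strict {u w : ℕ → ℝ} (hu : ∀ j, 0 < u j) (hw : ∀ j, 0 < w j)
    (hne : w 0 ≠ w 1) :
    ∑ p ∈ Finset.HasAntidiagonal.antidiagonal 1, u p.1 * u p.2 <
      ∑ p ∈ Finset.HasAntidiagonal.antidiagonal 1, (w p.1 / w p.2) * (u p.1 * u p.2) := by
  rw [Finset.Nat.sum_antidiagonal_eq_sum_range_succ_mk,
    Finset.Nat.sum_antidiagonal_eq_sum_range_succ_mk]
  simp only [Finset.sum_range_succ, Finset.sum_range_zero, zero_add]
  norm_num
  have h0 := hw 0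
  have h1 := hw 1
  have hu0 := hu 0
  have hu1 := hu 1
  have hsqpos : 0 < (w 0 - w 1) ^ 2 := by
    have := sub_ne_zero.mpr hne
    positivity
  have hamgm : 2 < w 0 / w 1 + w 1 / w 0 := by
    rw [div_add_div _ _ (ne_of_gt h1) (ne_of_gt h0), lt_div_iff₀ (by positivity)]
    nlinarith
  nlinarith [mul_lt_mul_of_pos_right hamgm (mul_pos hu0 hu1)]

lemma coeff_rw (m : ℕ) (p : ℕ × ℕ) :
    (c m p.1 + c (m + 1) p.1) * c (m + 2) p.2 =
      (((m : ℝ) + p.1 + 2) / ((m : ℝ) + p.2 + 2)) * (c (m + 1) p.1 * c (m + 1) p.2) := by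
  have h2 : c (m + 2) p.2 = c (m + 1) p.2 / ((m : ℝ) + p.2 + 2) := by
    rw [show m + 2 = (m + 1) + 1 from rfl, c_succ]
    push_cast
    ring_nf
  rw [c_add, h2]
  have h3 : ((m : ℝ) + p.2 + 2) ≠ 0 := by positivity
  field_simp

lemma coeff_le (m M : ℕ) :
    ∑ p ∈ Finset.HasAntidiagonal.antidiagonal M, c (m + 1) p.1 * c (m + 1) p.2 ≤
      ∑ p ∈ Finset.HasAntidiagonal.antidiagonal M, (c m p.1 + c (m + 1) p.1) * c (m + 2) p.2 := by
  calc ∑ p ∈ Finset.HasAntidiagonal.antidiagonal M, c (m + 1) p.1 * c (m + 1) p.2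
      ≤ ∑ p ∈ Finset.HasAntidiagonal.antidiagonal M,
          (((m : ℝ) + p.1 + 2) / ((m : ℝ) + p.2 + 2)) * (c (m + 1) p.1 * c (m + 1) p.2) :=
        swap_trick (u := fun j => c (m + 1) j) (w := fun j => (m : ℝ) + j + 2)
          (fun j => (c_pos _ _).le) (fun j => by positivity) M
    _ = _ := Finset.sum_congr rfl fun p _ => (coeff_rw m p).symm

lemma coeff_lt (m : ℕ) :
    ∑ p ∈ Finset.HasAntidiagonal.antidiagonal 1, c (m + 1) p.1 * c (m + 1) p.2 <
      ∑ p ∈ Finset.HasAntidiagonal.antidiagonal 1, (c m p.1 + c (m + 1) p.1) * c (m + 2) p.2 := by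
  calc ∑ p ∈ Finset.HasAntidiagonal.antidiagonal 1, c (m + 1) p.1 * c (m + 1) p.2
      < ∑ p ∈ Finset.HasAntidiagonal.antidiagonal 1,
          (((m : ℝ) + p.1 + 2) / ((m : ℝ) + p.2 + 2)) * (c (m + 1) p.1 * c (m + 1) p.2) :=
        swap_trick_strict (u := fun j => c (m + 1) j) (w := fun j => (m : ℝ) + j + 2)
          (fun j => c_pos _ _) (fun j => by positivity) (by norm_num)
    _ = _ := Finset.sum_congr rfl fun p _ => (coeff_rw m p).symm

end TuranAux

open TuranAux
theorem besselI_turan_lower (n : ℕ) (hn : 1 ≤ n) (r : ℝ) (hr : 0 < r) :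
    besselI (n - 1) r * besselI (n + 1) r >
      (besselI n r) ^ 2 - (2 / r) * besselI n r * besselI (n + 1) r := by
  obtain ⟨m, rfl⟩ : ∃ m, n = m + 1 := ⟨n - 1, by omega⟩
  simp only [Nat.add_sub_cancel, show m + 1 + 1 = m + 2 from rfl]
  set t : ℝ := r / 2 with htdef
  have ht : 0 < t := by positivity
  have hb : ∀ N : ℕ, besselI N r = ∑' k, term N t k := fun N => besselI_eq N r
  -- the auxiliary series `g` with `∑' g = I_{m+2} / t`
  set g : ℕ → ℝ := fun k => c (m + 2) k * t ^ (m + 1 + 2 * k) with hgdef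
  have hg_eq : ∀ k, term (m + 2) t k / t = g k := by
    intro k
    simp only [hgdef, term]
    rw [show m + 2 + 2 * k = (m + 1 + 2 * k) + 1 by omega, pow_succ]
    field_simp
  have hgsum : Summable g :=
    ((summable_term (m + 2) ht.le).div_const t).congr hg_eq
  have hgnonneg : ∀ k, 0 ≤ g k := fun k =>
    mul_nonneg (c_pos _ _).le (pow_nonneg ht.le _)
  have hgnorm : Summable fun k => ‖g k‖ := by
    simpa [Real.norm_eq_abs, abs_of_nonneg (hgnonneg _)] using hgsum
  have hgt : (∑' k, g k) = besselI (m + 2) r / t := by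
    rw [hb, ← tsum_div_const]
    exact (tsum_congr hg_eq).symm
  -- coefficient forms of the three products
  have hc1 : ∀ M, ∑ p ∈ Finset.HasAntidiagonal.antidiagonal M, term m t p.1 * term (m + 2) t p.2 =
      (∑ p ∈ Finset.HasAntidiagonal.antidiagonal M, c m p.1 * c (m + 2) p.2) * t ^ (2 * m + 2 + 2 * M) := by
    intro M
    rw [Finset.sum_mul]
    refine Finset.sum_congr rfl fun p hp => ?_
    have hpm : p.1 + p.2 = M := Finset.HasAntidiagonal.mem_antidiagonal.mp hp
    simp only [term]
    rw [mul_mul_mul_comm, ← pow_add,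
      show m + 2 * p.1 + (m + 2 + 2 * p.2) = 2 * m + 2 + 2 * M by omega]
  have hc2 : ∀ M, ∑ p ∈ Finset.HasAntidiagonal.antidiagonal M, term (m + 1) t p.1 * g p.2 =
      (∑ p ∈ Finset.HasAntidiagonal.antidiagonal M, c (m + 1) p.1 * c (m + 2) p.2) * t ^ (2 * m + 2 + 2 * M) := by
    intro M
    rw [Finset.sum_mul]
    refine Finset.sum_congr rfl fun p hp => ?_
    have hpm : p.1 + p.2 = M := Finset.HasAntidiagonal.mem_antidiagonal.mp hp
    simp only [term, hgdef]
    rw [mul_mul_mul_comm, ← pow_add,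
      show m + 1 + 2 * p.1 + (m + 1 + 2 * p.2) = 2 * m + 2 + 2 * M by omega]
  have hc3 : ∀ M, ∑ p ∈ Finset.HasAntidiagonal.antidiagonal M, term (m + 1) t p.1 * term (m + 1) t p.2 =
      (∑ p ∈ Finset.HasAntidiagonal.antidiagonal M, c (m + 1) p.1 * c (m + 1) p.2) * t ^ (2 * m + 2 + 2 * M) := by
    intro M
    rw [Finset.sum_mul]
    refine Finset.sum_congr rfl fun p hp => ?_
    have hpm : p.1 + p.2 = M := Finset.HasAntidiagonal.mem_antidiagonal.mp hp
    simp only [term]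
    rw [mul_mul_mul_comm, ← pow_add,
      show m + 1 + 2 * p.1 + (m + 1 + 2 * p.2) = 2 * m + 2 + 2 * M by omega]
  -- Cauchy products
  have hL1 : besselI m r * besselI (m + 2) r =
      ∑' M, (∑ p ∈ Finset.HasAntidiagonal.antidiagonal M, c m p.1 * c (m + 2) p.2) * t ^ (2 * m + 2 + 2 * M) := by
    rw [hb, hb,
      tsum_mul_tsum_eq_tsum_sum_antidiagonal_of_summable_norm
        (summable_norm_term m ht.le) (summable_norm_term (m + 2) ht.le)]
    exact tsum_congr hc1
  have hL2 : (∑' k, term (m + 1) t k) * (∑' k, g k) =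
      ∑' M, (∑ p ∈ Finset.HasAntidiagonal.antidiagonal M, c (m + 1) p.1 * c (m + 2) p.2) *
        t ^ (2 * m + 2 + 2 * M) := by
    rw [tsum_mul_tsum_eq_tsum_sum_antidiagonal_of_summable_norm
      (summable_norm_term (m + 1) ht.le) hgnorm]
    exact tsum_congr hc2
  have hR : besselI (m + 1) r ^ 2 =
      ∑' M, (∑ p ∈ Finset.HasAntidiagonal.antidiagonal M, c (m + 1) p.1 * c (m + 1) p.2) *
        t ^ (2 * m + 2 + 2 * M) := by
    rw [sq, hb,
      tsum_mul_tsum_eq_tsum_sum_antidiagonal_of_summable_norm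
        (summable_norm_term (m + 1) ht.le) (summable_norm_term (m + 1) ht.le)]
    exact tsum_congr hc3
  -- summability of the coefficient series
  have S1 : Summable (fun M => (∑ p ∈ Finset.HasAntidiagonal.antidiagonal M, c m p.1 * c (m + 2) p.2) *
      t ^ (2 * m + 2 + 2 * M)) :=
    ((summable_norm_sum_mul_antidiagonal_of_summable_norm
      (summable_norm_term m ht.le) (summable_norm_term (m + 2) ht.le)).of_norm).congr hc1
  have S2 : Summable (fun M => (∑ p ∈ Finset.HasAntidiagonal.antidiagonal M, c (m + 1) p.1 * c (m + 2) p.2) *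
      t ^ (2 * m + 2 + 2 * M)) :=
    ((summable_norm_sum_mul_antidiagonal_of_summable_norm
      (summable_norm_term (m + 1) ht.le) hgnorm).of_norm).congr hc2
  -- the combined left-hand side
  have hadd : besselI m r * besselI (m + 2) r + (∑' k, term (m + 1) t k) * (∑' k, g k) =
      ∑' M, ((∑ p ∈ Finset.HasAntidiagonal.antidiagonal M, (c m p.1 + c (m + 1) p.1) * c (m + 2) p.2) *
        t ^ (2 * m + 2 + 2 * M)) := by
    rw [hL1, hL2, ← Summable.tsum_add S1 S2]
    refine tsum_congr fun M => ?_
    rw [← add_mul, ← Finset.sum_add_distrib]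
    congr 1
    exact Finset.sum_congr rfl fun p _ => by ring
  have SA : Summable (fun M =>
      (∑ p ∈ Finset.HasAntidiagonal.antidiagonal M, (c m p.1 + c (m + 1) p.1) * c (m + 2) p.2) *
        t ^ (2 * m + 2 + 2 * M)) := by
    refine (S1.add S2).congr fun M => ?_
    rw [← add_mul, ← Finset.sum_add_distrib]
    congr 1
    exact Finset.sum_congr rfl fun p _ => by ring
  -- the strict comparison of the two series
  have hlt : (∑' M, (∑ p ∈ Finset.HasAntidiagonal.antidiagonal M, c (m + 1) p.1 * c (m + 1) p.2) *
        t ^ (2 * m + 2 + 2 * M)) <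
      ∑' M, ((∑ p ∈ Finset.HasAntidiagonal.antidiagonal M, (c m p.1 + c (m + 1) p.1) * c (m + 2) p.2) *
        t ^ (2 * m + 2 + 2 * M)) := by
    refine Summable.tsum_lt_tsum_of_nonneg (i := 1) (fun M => ?_) (fun M => ?_) ?_ SA
    · exact mul_nonneg (Finset.sum_nonneg fun p _ =>
        mul_nonneg (c_pos _ _).le (c_pos _ _).le) (pow_nonneg ht.le _)
    · exact mul_le_mul_of_nonneg_right (coeff_le m M) (pow_nonneg ht.le _)
    · exact mul_lt_mul_of_pos_right (coeff_lt m) (pow_pos ht _)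
  -- assemble
  have h2r : (2 / r) * besselI (m + 1) r * besselI (m + 2) r =
      (∑' k, term (m + 1) t k) * (∑' k, g k) := by
    rw [hgt, ← hb (m + 1), htdef]
    field_simp
  rw [gt_iff_lt, sub_lt_iff_lt_add, h2r, ← hadd] at *
  linarith [hR ▸ hlt, hadd]
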